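/- Let α ∈ ℝ, A, B ∈ ℂ with Re(e^{iα}A) < Re(e^{iα}B), let m ≥ 1, and let φ = (φ₁,…,φ_m) and ψ = (ψ₁,…,ψ_m) be m-tuples of measurable functions on e^{iα}ℝ with ‖φᵢ‖_α^{A,B} ≤ a and ‖ψᵢ‖_α^{A,B} ≤ a for all i, for some a ≥ 0. For a multi-index l = (l₁,…,l_m) ∈ ℕ^m with |l| := l₁+⋯+l_m ≥ 1, let φ^{*l} := φ₁^{*l₁} * ⋯ * φ_m^{*l_m}, the convolution product in direction α of the components of φ, the i-th taken lᵢ times. Then ‖φ^{*l} − ψ^{*l}‖_α^{A,B} ≤ |l| · a^{|l|−1} · max_i ‖φᵢ − ψᵢ‖_α^{A,B}; and if moreover all |φᵢ|_α^{A,B} and |ψᵢ|_α^{A,B} are finite, then |φ^{*l} − ψ^{*l}|_α^{A,B} ≤ |l| · a^{|l|−1} · max_i |φᵢ − ψᵢ|_α^{A,B}. -/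

import Mathlib

open Complex MeasureTheory

/-- The weight `|e^{−A e^{iα}s}| + |e^{−B e^{iα}s}|`. -/
noncomputable def BLweight (α : ℝ) (A B : ℂ) (s : ℝ) : ℝ :=
  ‖Complex.exp (-A * (Complex.exp (α * Complex.I) * s))‖ +
    ‖Complex.exp (-B * (Complex.exp (α * Complex.I) * s))‖

/-- The integral norm `‖φ‖_α^{A,B}` (functions on `e^{iα}ℝ` identified with functions
of the real parameter `s`), valued in `ℝ≥0∞`. -/
noncomputable def wnormE (α : ℝ) (A B : ℂ) (f : ℝ → ℂ) : ENNReal :=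
  ∫⁻ s : ℝ, ENNReal.ofReal (‖f s‖ * BLweight α A B s)

/-- The sup norm `|φ|_α^{A,B}`, valued in `ℝ≥0∞`. -/
noncomputable def snormE (α : ℝ) (A B : ℂ) (f : ℝ → ℂ) : ENNReal :=
  ⨆ s : ℝ, ENNReal.ofReal (‖f s‖ * BLweight α A B s)

/-- Convolution in direction `α`: `(f*g)(e^{iα}s) = e^{iα}∫ f(e^{iα}u) g(e^{iα}(s−u)) du`. -/
noncomputable def convDir (α : ℝ) (f g : ℝ → ℂ) : ℝ → ℂ :=
  fun s => Complex.exp (α * Complex.I) * ∫ u : ℝ, f u * g (s - u)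

/-- Convolution product of a (nonempty) list of functions in direction `α`. -/
noncomputable def convList (α : ℝ) : List (ℝ → ℂ) → (ℝ → ℂ)
  | [] => fun _ => 0
  | f :: l => l.foldl (convDir α) f

/-- The multi-convolution `φ^{*l} = φ₁^{*l₁} * ⋯ * φ_m^{*l_m}`. -/
noncomputable def iterConv (α : ℝ) {m : ℕ} (φ : Fin m → ℝ → ℂ) (l : Fin m → ℕ) :
    ℝ → ℂ :=
  convList α ((List.finRange m).flatMap fun i => List.replicate (l i) (φ i))

open scoped ENNReal

namespace ICAux

variable (α : ℝ) (A B : ℂ)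

lemma weight_pos (s : ℝ) : 0 < BLweight α A B s := by
  have h1 : 0 < ‖Complex.exp (-A * (Complex.exp (α * Complex.I) * s))‖ :=
    norm_pos_iff.mpr (Complex.exp_ne_zero _)
  have h2 : (0:ℝ) ≤ ‖Complex.exp (-B * (Complex.exp (α * Complex.I) * s))‖ := norm_nonneg _
  unfold BLweight; linarith

lemma weight_continuous : Continuous (BLweight α A B) := by
  unfold BLweight; fun_prop

lemma weight_submul (s u : ℝ) :
    BLweight α A B s ≤ BLweight α A B u * BLweight α A B (s - u) := by
  have key : ∀ C : ℂ, Complex.exp (-C * (Complex.exp (α * Complex.I) * s))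
      = Complex.exp (-C * (Complex.exp (α * Complex.I) * u)) *
        Complex.exp (-C * (Complex.exp (α * Complex.I) * ((s : ℂ) - (u : ℂ)))) := by
    intro C
    rw [← Complex.exp_add]; congr 1; push_cast; ring
  unfold BLweight
  push_cast
  rw [key A, key B, norm_mul, norm_mul]
  have a1 : (0:ℝ) ≤ ‖Complex.exp (-A * (Complex.exp (α * Complex.I) * u))‖ := norm_nonneg _
  have a2 : (0:ℝ) ≤ ‖Complex.exp (-A * (Complex.exp (α * Complex.I) * ((s:ℂ)-(u:ℂ))))‖ := norm_nonneg _
  have b1 : (0:ℝ) ≤ ‖Complex.exp (-B * (Complex.exp (α * Complex.I) * u))‖ := norm_nonneg _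
  have b2 : (0:ℝ) ≤ ‖Complex.exp (-B * (Complex.exp (α * Complex.I) * ((s:ℂ)-(u:ℂ))))‖ := norm_nonneg _
  nlinarith

/-- The kernel appearing in all Young-type estimates. -/
noncomputable def Gker (f g : ℝ → ℂ) (s u : ℝ) : ℝ≥0∞ :=
  ENNReal.ofReal (‖f u‖ * BLweight α A B u) *
    ENNReal.ofReal (‖g (s - u)‖ * BLweight α A B (s - u))

lemma kp (f g : ℝ → ℂ) (s u : ℝ) :
    ENNReal.ofReal (‖f u * g (s - u)‖ * BLweight α A B s) ≤ Gker α A B f g s u := by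
  unfold Gker
  rw [← ENNReal.ofReal_mul (mul_nonneg (norm_nonneg _) (weight_pos α A B u).le)]
  apply ENNReal.ofReal_le_ofReal
  rw [norm_mul]
  have h := weight_submul α A B s u
  have h1 : (0:ℝ) ≤ ‖f u‖ := norm_nonneg _
  have h2 : (0:ℝ) ≤ ‖g (s-u)‖ := norm_nonneg _
  have h3 : (0:ℝ) ≤ BLweight α A B u := (weight_pos α A B u).le
  have h4 : (0:ℝ) ≤ BLweight α A B (s-u) := (weight_pos α A B (s-u)).le
  nlinarith [mul_nonneg h1 h2]

lemma meas_wfun {f : ℝ → ℂ} (hf : Measurable f) :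
    Measurable fun s => ENNReal.ofReal (‖f s‖ * BLweight α A B s) :=
  (hf.norm.mul (weight_continuous α A B).measurable).ennreal_ofReal

lemma meas_wfun_shift {g : ℝ → ℂ} (hg : Measurable g) (s : ℝ) :
    Measurable fun u => ENNReal.ofReal (‖g (s - u)‖ * BLweight α A B (s - u)) :=
  (meas_wfun α A B hg).comp (measurable_const.sub measurable_id)

lemma meas_G {f g : ℝ → ℂ} (hf : Measurable f) (hg : Measurable g) :
    Measurable (Function.uncurry fun s u => Gker α A B f g s u) := by
  show Measurable fun p : ℝ × ℝ => Gker α A B f g p.1 p.2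
  unfold Gker
  apply Measurable.mul (f := fun p : ℝ × ℝ => ENNReal.ofReal (‖f p.2‖ * BLweight α A B p.2))
    (g := fun p : ℝ × ℝ => ENNReal.ofReal (‖g (p.1 - p.2)‖ * BLweight α A B (p.1 - p.2)))
  · exact (meas_wfun α A B hf).comp measurable_snd
  · exact (meas_wfun α A B hg).comp (measurable_fst.sub measurable_snd)

lemma transl (Φ : ℝ → ℝ≥0∞) (hΦ : Measurable Φ) (s : ℝ) :
    ∫⁻ u, Φ (s - u) = ∫⁻ u, Φ u := by
  have h1 := measurePreserving_add_left (volume : Measure ℝ) s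
  have h2 := Measure.measurePreserving_neg (volume : Measure ℝ)
  have hmp : MeasurePreserving (fun u : ℝ => s - u) volume volume := by
    simpa [Function.comp_def, sub_eq_add_neg] using h1.comp h2
  exact hmp.lintegral_comp hΦ

lemma transl' (Φ : ℝ → ℝ≥0∞) (hΦ : Measurable Φ) (u : ℝ) :
    ∫⁻ s, Φ (s - u) = ∫⁻ s, Φ s :=
  (measurePreserving_sub_right (volume : Measure ℝ) u).lintegral_comp hΦ

end ICAux

namespace ICAux

variable (α : ℝ) (A B : ℂ)

lemma norm_phase : ‖Complex.exp ((α : ℂ) * Complex.I)‖ = 1 := by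
  simpa using Complex.abs_exp_ofReal_mul_I α

lemma key_s {f g : ℝ → ℂ} (hf : Measurable f) (hg : Measurable g) (s : ℝ) :
    ENNReal.ofReal (‖convDir α f g s‖ * BLweight α A B s) ≤
      ∫⁻ u, Gker α A B f g s u := by
  have hnorm : ‖convDir α f g s‖ = ‖∫ u : ℝ, f u * g (s - u)‖ := by
    unfold convDir; rw [norm_mul, norm_phase, one_mul]
  have hgs : Measurable fun u => g (s - u) := hg.comp (measurable_const.sub measurable_id)
  have hmeas : Measurable fun u => ((‖f u * g (s - u)‖₊ : ℝ≥0∞)) := Measurable.coe_nnreal_ennreal (Measurable.nnnorm (hf.mul hgs))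
  calc ENNReal.ofReal (‖convDir α f g s‖ * BLweight α A B s)
      = (‖∫ u : ℝ, f u * g (s - u)‖₊ : ℝ≥0∞) * ENNReal.ofReal (BLweight α A B s) := by
        rw [hnorm, ENNReal.ofReal_mul (norm_nonneg _), ofReal_norm, enorm_eq_nnnorm]
    _ ≤ (∫⁻ u, (‖f u * g (s - u)‖₊ : ℝ≥0∞)) * ENNReal.ofReal (BLweight α A B s) :=
        mul_le_mul_left (enorm_integral_le_lintegral_enorm _) _
    _ = ∫⁻ u, (‖f u * g (s - u)‖₊ : ℝ≥0∞) * ENNReal.ofReal (BLweight α A B s) :=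
        (lintegral_mul_const _ hmeas).symm
    _ ≤ ∫⁻ u, Gker α A B f g s u := by
        refine lintegral_mono fun u => ?_
        calc (‖f u * g (s - u)‖₊ : ℝ≥0∞) * ENNReal.ofReal (BLweight α A B s)
            = ENNReal.ofReal (‖f u * g (s - u)‖ * BLweight α A B s) := by
              rw [ENNReal.ofReal_mul (norm_nonneg _), ofReal_norm, enorm_eq_nnnorm]
          _ ≤ Gker α A B f g s u := kp α A B f g s u

lemma snorm_bound (f : ℝ → ℂ) (s : ℝ) :
    ENNReal.ofReal (‖f s‖ * BLweight α A B s) ≤ snormE α A B f :=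
  le_iSup (fun s => ENNReal.ofReal (‖f s‖ * BLweight α A B s)) s

lemma Y2 {f g : ℝ → ℂ} (hf : Measurable f) (hg : Measurable g) :
    snormE α A B (convDir α f g) ≤ snormE α A B f * wnormE α A B g := by
  refine iSup_le fun s => ?_
  calc ENNReal.ofReal (‖convDir α f g s‖ * BLweight α A B s)
      ≤ ∫⁻ u, Gker α A B f g s u := key_s α A B hf hg s
    _ ≤ ∫⁻ u, snormE α A B f * ENNReal.ofReal (‖g (s - u)‖ * BLweight α A B (s - u)) := by
        refine lintegral_mono fun u => ?_
        exact mul_le_mul_left (snorm_bound α A B f u) _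
    _ = snormE α A B f * ∫⁻ u, ENNReal.ofReal (‖g (s - u)‖ * BLweight α A B (s - u)) :=
        lintegral_const_mul _ (meas_wfun_shift α A B hg s)
    _ = snormE α A B f * wnormE α A B g := by
        rw [transl _ (meas_wfun α A B hg) s]; rfl

lemma Y2' {f g : ℝ → ℂ} (hf : Measurable f) (hg : Measurable g) :
    snormE α A B (convDir α f g) ≤ wnormE α A B f * snormE α A B g := by
  refine iSup_le fun s => ?_
  calc ENNReal.ofReal (‖convDir α f g s‖ * BLweight α A B s)
      ≤ ∫⁻ u, Gker α A B f g s u := key_s α A B hf hg s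
    _ ≤ ∫⁻ u, ENNReal.ofReal (‖f u‖ * BLweight α A B u) * snormE α A B g := by
        refine lintegral_mono fun u => ?_
        exact mul_le_mul_right (snorm_bound α A B g (s - u)) _
    _ = wnormE α A B f * snormE α A B g :=
        lintegral_mul_const _ (meas_wfun α A B hf)

lemma lintlint_G {f g : ℝ → ℂ} (hf : Measurable f) (hg : Measurable g) :
    ∫⁻ s, ∫⁻ u, Gker α A B f g s u = wnormE α A B f * wnormE α A B g := by
  rw [lintegral_lintegral_swap (meas_G α A B hf hg).aemeasurable]
  calc ∫⁻ u, ∫⁻ s, Gker α A B f g s u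
      = ∫⁻ u, ENNReal.ofReal (‖f u‖ * BLweight α A B u) *
          ∫⁻ s, ENNReal.ofReal (‖g (s - u)‖ * BLweight α A B (s - u)) := by
        refine lintegral_congr fun u => ?_
        exact lintegral_const_mul _ ((meas_wfun α A B hg).comp (measurable_id.sub measurable_const))
    _ = ∫⁻ u, ENNReal.ofReal (‖f u‖ * BLweight α A B u) * wnormE α A B g := by
        refine lintegral_congr fun u => ?_
        rw [transl' _ (meas_wfun α A B hg) u]; rfl
    _ = wnormE α A B f * wnormE α A B g := lintegral_mul_const _ (meas_wfun α A B hf)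

lemma Y1 {f g : ℝ → ℂ} (hf : Measurable f) (hg : Measurable g) :
    wnormE α A B (convDir α f g) ≤ wnormE α A B f * wnormE α A B g := by
  calc wnormE α A B (convDir α f g)
      ≤ ∫⁻ s, ∫⁻ u, Gker α A B f g s u := lintegral_mono (key_s α A B hf hg)
    _ = wnormE α A B f * wnormE α A B g := lintlint_G α A B hf hg

lemma conv_meas {f g : ℝ → ℂ} (hf : Measurable f) (hg : Measurable g) :
    Measurable (convDir α f g) := by
  apply Measurable.const_mul
  have : StronglyMeasurable fun p : ℝ × ℝ => f p.2 * g (p.1 - p.2) :=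
    ((hf.comp measurable_snd).mul (hg.comp (measurable_fst.sub measurable_snd))).stronglyMeasurable
  exact this.integral_prod_right'.measurable

lemma integrable_of_G_lt {f g : ℝ → ℂ} (hf : Measurable f) (hg : Measurable g) (s : ℝ)
    (h : ∫⁻ u, Gker α A B f g s u < ⊤) :
    Integrable (fun u => f u * g (s - u)) := by
  have hgs : Measurable fun u => g (s - u) := hg.comp (measurable_const.sub measurable_id)
  have hws : ENNReal.ofReal (BLweight α A B s) ≠ 0 := by
    simp [ENNReal.ofReal_eq_zero, not_le, weight_pos α A B s]
  have hkey : (∫⁻ u, (‖f u * g (s - u)‖₊ : ℝ≥0∞)) * ENNReal.ofReal (BLweight α A B s)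
      ≤ ∫⁻ u, Gker α A B f g s u := by
    rw [← lintegral_mul_const _ (Measurable.coe_nnreal_ennreal (Measurable.nnnorm (hf.mul hgs)) :
      Measurable fun u => ((‖f u * g (s - u)‖₊ : ℝ≥0∞)))]
    refine lintegral_mono fun u => ?_
    rw [← enorm_eq_nnnorm, ← ofReal_norm, ← ENNReal.ofReal_mul (norm_nonneg _)]
    exact kp α A B f g s u
  have hfin : ∫⁻ u, (‖f u * g (s - u)‖₊ : ℝ≥0∞) < ⊤ := by
    by_contra hcon
    push_neg at hcon
    have htop : ∫⁻ u, (‖f u * g (s - u)‖₊ : ℝ≥0∞) = ⊤ := top_le_iff.mp hcon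
    rw [htop, ENNReal.top_mul hws] at hkey
    exact (lt_irrefl _ (lt_of_le_of_lt hkey h)).elim
  exact ⟨(hf.mul hgs).aestronglyMeasurable, hfin⟩

lemma G_le_WS {f g : ℝ → ℂ} (hf : Measurable f) (s : ℝ) :
    ∫⁻ u, Gker α A B f g s u ≤ wnormE α A B f * snormE α A B g := by
  calc ∫⁻ u, Gker α A B f g s u
      ≤ ∫⁻ u, ENNReal.ofReal (‖f u‖ * BLweight α A B u) * snormE α A B g :=
        lintegral_mono fun u => mul_le_mul_right (snorm_bound α A B g (s - u)) _
    _ = wnormE α A B f * snormE α A B g := lintegral_mul_const _ (meas_wfun α A B hf)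

lemma I_pt {f g : ℝ → ℂ} (hf : Measurable f) (hg : Measurable g)
    (hWf : wnormE α A B f < ⊤) (hSg : snormE α A B g < ⊤) (s : ℝ) :
    Integrable (fun u => f u * g (s - u)) :=
  integrable_of_G_lt α A B hf hg s
    (lt_of_le_of_lt (G_le_WS α A B hf s) (ENNReal.mul_lt_top hWf hSg))

lemma I_ae {f g : ℝ → ℂ} (hf : Measurable f) (hg : Measurable g)
    (hWf : wnormE α A B f < ⊤) (hWg : wnormE α A B g < ⊤) :
    ∀ᵐ s : ℝ, Integrable (fun u => f u * g (s - u)) := by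
  have hmeas : Measurable fun s => ∫⁻ u, Gker α A B f g s u :=
    (meas_G α A B hf hg).lintegral_prod_right'
  have hfin : ∫⁻ s, ∫⁻ u, Gker α A B f g s u < ⊤ := by
    rw [lintlint_G α A B hf hg]
    exact ENNReal.mul_lt_top hWf hWg
  filter_upwards [ae_lt_top hmeas hfin.ne] with s hs
  exact integrable_of_G_lt α A B hf hg s hs

lemma conv_sub_right {f g h : ℝ → ℂ} (s : ℝ)
    (h1 : Integrable (fun u => f u * g (s - u)))
    (h2 : Integrable (fun u => f u * h (s - u))) :
    convDir α f (fun v => g v - h v) s = convDir α f g s - convDir α f h s := by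
  unfold convDir
  rw [← mul_sub]
  congr 1
  rw [show (fun u => f u * ((fun v => g v - h v) (s - u)))
      = fun u => f u * g (s - u) - f u * h (s - u) from funext fun u => mul_sub _ _ _]
  exact integral_sub h1 h2

lemma conv_sub_left {f g h : ℝ → ℂ} (s : ℝ)
    (h1 : Integrable (fun u => f u * h (s - u)))
    (h2 : Integrable (fun u => g u * h (s - u))) :
    convDir α (fun v => f v - g v) h s = convDir α f h s - convDir α g h s := by
  unfold convDir
  rw [← mul_sub]
  congr 1
  rw [show (fun u => (fun v => f v - g v) u * h (s - u))
      = fun u => f u * h (s - u) - g u * h (s - u) from funext fun u => sub_mul _ _ _]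
  exact integral_sub h1 h2

lemma wnorm_add_le {u v : ℝ → ℂ} (hu : Measurable u) :
    wnormE α A B (fun s => u s + v s) ≤ wnormE α A B u + wnormE α A B v := by
  have hpt : ∀ s, ENNReal.ofReal (‖u s + v s‖ * BLweight α A B s) ≤
      ENNReal.ofReal (‖u s‖ * BLweight α A B s) + ENNReal.ofReal (‖v s‖ * BLweight α A B s) := by
    intro s
    rw [← ENNReal.ofReal_add (mul_nonneg (norm_nonneg _) (weight_pos α A B s).le)
      (mul_nonneg (norm_nonneg _) (weight_pos α A B s).le)]
    apply ENNReal.ofReal_le_ofReal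
    rw [← add_mul]
    exact mul_le_mul_of_nonneg_right (norm_add_le _ _) (weight_pos α A B s).le
  calc wnormE α A B (fun s => u s + v s)
      ≤ ∫⁻ s, (ENNReal.ofReal (‖u s‖ * BLweight α A B s) +
          ENNReal.ofReal (‖v s‖ * BLweight α A B s)) := lintegral_mono hpt
    _ = wnormE α A B u + wnormE α A B v := lintegral_add_left (meas_wfun α A B hu) _

lemma snorm_add_le (u v : ℝ → ℂ) :
    snormE α A B (fun s => u s + v s) ≤ snormE α A B u + snormE α A B v := by
  refine iSup_le fun s => ?_
  have hpt : ENNReal.ofReal (‖u s + v s‖ * BLweight α A B s) ≤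
      ENNReal.ofReal (‖u s‖ * BLweight α A B s) + ENNReal.ofReal (‖v s‖ * BLweight α A B s) := by
    rw [← ENNReal.ofReal_add (mul_nonneg (norm_nonneg _) (weight_pos α A B s).le)
      (mul_nonneg (norm_nonneg _) (weight_pos α A B s).le)]
    apply ENNReal.ofReal_le_ofReal
    rw [← add_mul]
    exact mul_le_mul_of_nonneg_right (norm_add_le _ _) (weight_pos α A B s).le
  exact hpt.trans (add_le_add (snorm_bound α A B u s) (snorm_bound α A B v s))

lemma wnorm_congr_ae {u v : ℝ → ℂ} (h : u =ᵐ[volume] v) :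
    wnormE α A B u = wnormE α A B v :=
  lintegral_congr_ae (h.mono fun s hs => by simp only [hs])

lemma fold_meas {f : ℝ → ℂ} (hf : Measurable f) (F : List (ℝ → ℂ))
    (hF : ∀ g ∈ F, Measurable g) : Measurable (F.foldl (convDir α) f) := by
  induction F generalizing f with
  | nil => exact hf
  | cons g F ih =>
    exact ih (conv_meas α (hf) (hF g (List.mem_cons_self)))
      fun g' hg' => hF g' (List.mem_cons_of_mem _ hg')

lemma fold_wnorm (Acon : ℝ≥0∞) {f : ℝ → ℂ} (C : ℝ≥0∞) (hf : Measurable f)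
    (hfC : wnormE α A B f ≤ C) (F : List (ℝ → ℂ))
    (hF : ∀ g ∈ F, Measurable g ∧ wnormE α A B g ≤ Acon) :
    wnormE α A B (F.foldl (convDir α) f) ≤ C * Acon ^ F.length := by
  induction F generalizing f C with
  | nil => simpa using hfC
  | cons g F ih =>
    have hg := hF g (List.mem_cons_self)
    have h1 : wnormE α A B (convDir α f g) ≤ C * Acon :=
      (Y1 α A B hf hg.1).trans (mul_le_mul' hfC hg.2)
    have := ih (C := C * Acon) (conv_meas α hf hg.1) h1
      (fun g' hg' => hF g' (List.mem_cons_of_mem _ hg'))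
    calc wnormE α A B ((g :: F).foldl (convDir α) f)
        = wnormE α A B (F.foldl (convDir α) (convDir α f g)) := rfl
      _ ≤ C * Acon * Acon ^ F.length := this
      _ = C * Acon ^ (g :: F).length := by rw [List.length_cons, pow_succ]; ring

lemma mainW (Acon D : ℝ≥0∞) (hA : Acon ≠ ⊤)
    (P : List ((ℝ → ℂ) × (ℝ → ℂ))) (f g : ℝ → ℂ)
    (hf : Measurable f) (hg : Measurable g)
    (hfA : wnormE α A B f ≤ Acon) (hgA : wnormE α A B g ≤ Acon)
    (hfg : wnormE α A B (fun s => f s - g s) ≤ D)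
    (hP : ∀ p ∈ P, Measurable p.1 ∧ Measurable p.2 ∧ wnormE α A B p.1 ≤ Acon ∧
      wnormE α A B p.2 ≤ Acon ∧ wnormE α A B (fun s => p.1 s - p.2 s) ≤ D) :
    wnormE α A B (fun s => (P.map Prod.fst).foldl (convDir α) f s -
        (P.map Prod.snd).foldl (convDir α) g s)
      ≤ ((P.length : ℝ≥0∞) + 1) * Acon ^ P.length * D := by
  induction P using List.reverseRecOn with
  | nil => simpa using hfg
  | append_singleton P p ih =>
    have hP' : ∀ q ∈ P, Measurable q.1 ∧ Measurable q.2 ∧ wnormE α A B q.1 ≤ Acon ∧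
        wnormE α A B q.2 ≤ Acon ∧ wnormE α A B (fun s => q.1 s - q.2 s) ≤ D :=
      fun q hq => hP q (List.mem_append_left _ hq)
    have hp := hP p (List.mem_append_right _ (List.mem_singleton_self p))
    obtain ⟨hp1m, hp2m, hp1A, hp2A, hpD⟩ := hp
    have IH := ih hP'
    simp only [List.map_append, List.foldl_append, List.map_cons, List.map_nil,
      List.foldl_cons, List.foldl_nil, List.length_append, List.length_cons,
      List.length_nil]
    set H := (P.map Prod.fst).foldl (convDir α) f with hH
    set K := (P.map Prod.snd).foldl (convDir α) g with hK
    have hHm : Measurable H := fold_meas α hf _ fun q hq => by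
      obtain ⟨q', hq', rfl⟩ := List.mem_map.mp hq; exact (hP' q' hq').1
    have hKm : Measurable K := fold_meas α hg _ fun q hq => by
      obtain ⟨q', hq', rfl⟩ := List.mem_map.mp hq; exact (hP' q' hq').2.1
    have hHW : wnormE α A B H ≤ Acon ^ (P.length + 1) := by
      have hmem : ∀ q ∈ P.map Prod.fst, Measurable q ∧ wnormE α A B q ≤ Acon := by
        intro q hq
        obtain ⟨q', hq', rfl⟩ := List.mem_map.mp hq
        exact ⟨(hP' q' hq').1, (hP' q' hq').2.2.1⟩
      have := fold_wnorm α A B Acon Acon hf hfA (P.map Prod.fst) hmem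
      simpa [pow_succ, mul_comm, List.length_map] using this
    have hKW : wnormE α A B K ≤ Acon ^ (P.length + 1) := by
      have hmem : ∀ q ∈ P.map Prod.snd, Measurable q ∧ wnormE α A B q ≤ Acon := by
        intro q hq
        obtain ⟨q', hq', rfl⟩ := List.mem_map.mp hq
        exact ⟨(hP' q' hq').2.1, (hP' q' hq').2.2.2.1⟩
      have := fold_wnorm α A B Acon Acon hg hgA (P.map Prod.snd) hmem
      simpa [pow_succ, mul_comm, List.length_map] using this
    have hAlt : Acon < ⊤ := lt_top_iff_ne_top.mpr hA
    have hHlt : wnormE α A B H < ⊤ := lt_of_le_of_lt hHW (ENNReal.pow_lt_top hAlt)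
    have hKlt : wnormE α A B K < ⊤ := lt_of_le_of_lt hKW (ENNReal.pow_lt_top hAlt)
    have hp1lt : wnormE α A B p.1 < ⊤ := lt_of_le_of_lt hp1A hAlt
    have hp2lt : wnormE α A B p.2 < ⊤ := lt_of_le_of_lt hp2A hAlt
    have h1 := I_ae α A B hHm hp1m hHlt hp1lt
    have h2 := I_ae α A B hHm hp2m hHlt hp2lt
    have h3 := I_ae α A B hKm hp2m hKlt hp2lt
    have heq : (fun s => convDir α H p.1 s - convDir α K p.2 s) =ᵐ[volume]
        (fun s => convDir α H (fun v => p.1 v - p.2 v) s +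
          convDir α (fun v => H v - K v) p.2 s) := by
      filter_upwards [h1, h2, h3] with s hs1 hs2 hs3
      rw [conv_sub_right α s hs1 hs2, conv_sub_left α s hs2 hs3]
      ring
    have hΔm : Measurable fun v => p.1 v - p.2 v := hp1m.sub hp2m
    have hΔHKm : Measurable fun v => H v - K v := hHm.sub hKm
    calc wnormE α A B (fun s => convDir α H p.1 s - convDir α K p.2 s)
        = wnormE α A B (fun s => convDir α H (fun v => p.1 v - p.2 v) s +
            convDir α (fun v => H v - K v) p.2 s) := wnorm_congr_ae α A B heq
      _ ≤ wnormE α A B (convDir α H (fun v => p.1 v - p.2 v)) +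
            wnormE α A B (convDir α (fun v => H v - K v) p.2) :=
          wnorm_add_le α A B (conv_meas α hHm hΔm)
      _ ≤ wnormE α A B H * wnormE α A B (fun v => p.1 v - p.2 v) +
            wnormE α A B (fun v => H v - K v) * wnormE α A B p.2 :=
          add_le_add (Y1 α A B hHm hΔm) (Y1 α A B hΔHKm hp2m)
      _ ≤ Acon ^ (P.length + 1) * D +
            (((P.length : ℝ≥0∞) + 1) * Acon ^ P.length * D) * Acon :=
          add_le_add (mul_le_mul' hHW hpD) (mul_le_mul' IH hp2A)
      _ = ((P.length : ℝ≥0∞) + 1 + 1) * Acon ^ (P.length + 1) * D := by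
          rw [pow_succ]; ring
      _ = (↑(P.length + 1) + 1) * Acon ^ (P.length + 1) * D := by push_cast; ring
lemma mainS (Acon Ds : ℝ≥0∞) (hA : Acon ≠ ⊤)
    (P : List ((ℝ → ℂ) × (ℝ → ℂ))) (f g : ℝ → ℂ)
    (hf : Measurable f) (hg : Measurable g)
    (hfA : wnormE α A B f ≤ Acon) (hgA : wnormE α A B g ≤ Acon)
    (hfS : snormE α A B f < ⊤) (hgS : snormE α A B g < ⊤)
    (hfg : snormE α A B (fun s => f s - g s) ≤ Ds)
    (hP : ∀ p ∈ P, Measurable p.1 ∧ Measurable p.2 ∧ wnormE α A B p.1 ≤ Acon ∧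
      wnormE α A B p.2 ≤ Acon ∧ snormE α A B p.1 < ⊤ ∧ snormE α A B p.2 < ⊤ ∧
      snormE α A B (fun s => p.1 s - p.2 s) ≤ Ds) :
    snormE α A B (fun s => (P.map Prod.fst).foldl (convDir α) f s -
        (P.map Prod.snd).foldl (convDir α) g s)
      ≤ ((P.length : ℝ≥0∞) + 1) * Acon ^ P.length * Ds := by
  induction P using List.reverseRecOn with
  | nil => simpa using hfg
  | append_singleton P p ih =>
    have hP' : ∀ q ∈ P, Measurable q.1 ∧ Measurable q.2 ∧ wnormE α A B q.1 ≤ Acon ∧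
        wnormE α A B q.2 ≤ Acon ∧ snormE α A B q.1 < ⊤ ∧ snormE α A B q.2 < ⊤ ∧
        snormE α A B (fun s => q.1 s - q.2 s) ≤ Ds :=
      fun q hq => hP q (List.mem_append_left _ hq)
    have hp := hP p (List.mem_append_right _ (List.mem_singleton_self p))
    obtain ⟨hp1m, hp2m, hp1A, hp2A, hp1S, hp2S, hpD⟩ := hp
    have IH := ih hP'
    simp only [List.map_append, List.foldl_append, List.map_cons, List.map_nil,
      List.foldl_cons, List.foldl_nil, List.length_append, List.length_cons,
      List.length_nil]
    set H := (P.map Prod.fst).foldl (convDir α) f with hH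
    set K := (P.map Prod.snd).foldl (convDir α) g with hK
    have hHm : Measurable H := fold_meas α hf _ fun q hq => by
      obtain ⟨q', hq', rfl⟩ := List.mem_map.mp hq; exact (hP' q' hq').1
    have hKm : Measurable K := fold_meas α hg _ fun q hq => by
      obtain ⟨q', hq', rfl⟩ := List.mem_map.mp hq; exact (hP' q' hq').2.1
    have hHW : wnormE α A B H ≤ Acon ^ (P.length + 1) := by
      have hmem : ∀ q ∈ P.map Prod.fst, Measurable q ∧ wnormE α A B q ≤ Acon := by
        intro q hq
        obtain ⟨q', hq', rfl⟩ := List.mem_map.mp hq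
        exact ⟨(hP' q' hq').1, (hP' q' hq').2.2.1⟩
      have := fold_wnorm α A B Acon Acon hf hfA (P.map Prod.fst) hmem
      simpa [pow_succ, mul_comm, List.length_map] using this
    have hKW : wnormE α A B K ≤ Acon ^ (P.length + 1) := by
      have hmem : ∀ q ∈ P.map Prod.snd, Measurable q ∧ wnormE α A B q ≤ Acon := by
        intro q hq
        obtain ⟨q', hq', rfl⟩ := List.mem_map.mp hq
        exact ⟨(hP' q' hq').2.1, (hP' q' hq').2.2.2.1⟩
      have := fold_wnorm α A B Acon Acon hg hgA (P.map Prod.snd) hmem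
      simpa [pow_succ, mul_comm, List.length_map] using this
    have hAlt : Acon < ⊤ := lt_top_iff_ne_top.mpr hA
    have hHlt : wnormE α A B H < ⊤ := lt_of_le_of_lt hHW (ENNReal.pow_lt_top hAlt)
    have hKlt : wnormE α A B K < ⊤ := lt_of_le_of_lt hKW (ENNReal.pow_lt_top hAlt)
    have h1 : ∀ s, Integrable fun u => H u * p.1 (s - u) :=
      I_pt α A B hHm hp1m hHlt hp1S
    have h2 : ∀ s, Integrable fun u => H u * p.2 (s - u) :=
      I_pt α A B hHm hp2m hHlt hp2S
    have h3 : ∀ s, Integrable fun u => K u * p.2 (s - u) :=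
      I_pt α A B hKm hp2m hKlt hp2S
    have heq : (fun s => convDir α H p.1 s - convDir α K p.2 s) =
        (fun s => convDir α H (fun v => p.1 v - p.2 v) s +
          convDir α (fun v => H v - K v) p.2 s) := by
      funext s
      rw [conv_sub_right α s (h1 s) (h2 s), conv_sub_left α s (h2 s) (h3 s)]
      ring
    have hΔm : Measurable fun v => p.1 v - p.2 v := hp1m.sub hp2m
    have hΔHKm : Measurable fun v => H v - K v := hHm.sub hKm
    calc snormE α A B (fun s => convDir α H p.1 s - convDir α K p.2 s)
        = snormE α A B (fun s => convDir α H (fun v => p.1 v - p.2 v) s +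
            convDir α (fun v => H v - K v) p.2 s) := by rw [heq]
      _ ≤ snormE α A B (convDir α H (fun v => p.1 v - p.2 v)) +
            snormE α A B (convDir α (fun v => H v - K v) p.2) :=
          snorm_add_le α A B _ _
      _ ≤ wnormE α A B H * snormE α A B (fun v => p.1 v - p.2 v) +
            snormE α A B (fun v => H v - K v) * wnormE α A B p.2 :=
          add_le_add (Y2' α A B hHm hΔm) (Y2 α A B hΔHKm hp2m)
      _ ≤ Acon ^ (P.length + 1) * Ds +
            (((P.length : ℝ≥0∞) + 1) * Acon ^ P.length * Ds) * Acon :=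
          add_le_add (mul_le_mul' hHW hpD) (mul_le_mul' IH hp2A)
      _ = ((P.length : ℝ≥0∞) + 1 + 1) * Acon ^ (P.length + 1) * Ds := by
          rw [pow_succ]; ring
      _ = (↑(P.length + 1) + 1) * Acon ^ (P.length + 1) * Ds := by push_cast; ring
end ICAux

/-- Lemma 4.4 of the paper. Difference estimate for multi-convolution
powers: `‖φ^{*l} − ψ^{*l}‖ ≤ |l|·a^{|l|−1}·maxᵢ ‖φᵢ − ψᵢ‖`, in both the integral norm
and the sup norm. -/
theorem iterConv_difference_estimate
    (α : ℝ) (A B : ℂ)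
    (hAB : (Complex.exp (α * Complex.I) * A).re < (Complex.exp (α * Complex.I) * B).re)
    (m : ℕ) (hm : 1 ≤ m)
    (φ ψ : Fin m → ℝ → ℂ)
    (hmφ : ∀ i, Measurable (φ i)) (hmψ : ∀ i, Measurable (ψ i))
    (a : ℝ) (ha : 0 ≤ a)
    (hφ : ∀ i, wnormE α A B (φ i) ≤ ENNReal.ofReal a)
    (hψ : ∀ i, wnormE α A B (ψ i) ≤ ENNReal.ofReal a)
    (l : Fin m → ℕ) (hl : 1 ≤ ∑ i, l i) :
    wnormE α A B (fun s => iterConv α φ l s - iterConv α ψ l s) ≤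
      ((∑ i, l i : ℕ) : ENNReal) * ENNReal.ofReal a ^ ((∑ i, l i) - 1) *
        ⨆ i : Fin m, wnormE α A B (fun s => φ i s - ψ i s) ∧
    ((∀ i, snormE α A B (φ i) < ⊤) → (∀ i, snormE α A B (ψ i) < ⊤) →
      snormE α A B (fun s => iterConv α φ l s - iterConv α ψ l s) ≤
        ((∑ i, l i : ℕ) : ENNReal) * ENNReal.ofReal a ^ ((∑ i, l i) - 1) *
          ⨆ i : Fin m, snormE α A B (fun s => φ i s - ψ i s)) := by
  classical
  set P : List ((ℝ → ℂ) × (ℝ → ℂ)) :=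
    (List.finRange m).flatMap (fun i => List.replicate (l i) (φ i, ψ i)) with hPdef
  have hlen : P.length = ∑ i, l i := by
    rw [hPdef, List.length_flatMap, Fin.sum_univ_def]
    congr 1
    simp [Function.comp]
  have hprop : ∀ q ∈ P, ∃ i, q = (φ i, ψ i) := by
    intro q hq
    rw [hPdef] at hq
    simp only [List.mem_flatMap, List.mem_finRange, List.mem_replicate, true_and] at hq
    obtain ⟨i, _, h⟩ := hq
    exact ⟨i, h⟩
  have hfst : iterConv α φ l = convList α (P.map Prod.fst) := by
    unfold iterConv
    congr 1
    rw [hPdef, List.map_flatMap]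
    simp
  have hsnd : iterConv α ψ l = convList α (P.map Prod.snd) := by
    unfold iterConv
    congr 1
    rw [hPdef, List.map_flatMap]
    simp
  obtain ⟨p, P', hPeq⟩ : ∃ p P', P = p :: P' := by
    cases hc : P with
    | nil => rw [hc] at hlen; simp at hlen; omega
    | cons a b => exact ⟨a, b, rfl⟩
  have hsum : ∑ i, l i = P'.length + 1 := by
    rw [← hlen, hPeq]; simp
  obtain ⟨i₀, hp⟩ := hprop p (hPeq ▸ List.mem_cons_self (a := p) (l := P'))
  have hprop' : ∀ q ∈ P', ∃ i, q = (φ i, ψ i) :=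
    fun q hq => hprop q (hPeq ▸ List.mem_cons_of_mem p hq)
  have hfst' : iterConv α φ l = (P'.map Prod.fst).foldl (convDir α) p.1 := by
    rw [hfst, hPeq]; rfl
  have hsnd' : iterConv α ψ l = (P'.map Prod.snd).foldl (convDir α) p.2 := by
    rw [hsnd, hPeq]; rfl
  have hAne : (ENNReal.ofReal a) ≠ ⊤ := ENNReal.ofReal_ne_top
  constructor
  · -- the wnorm estimate
    have hPmain : ∀ q ∈ P', Measurable q.1 ∧ Measurable q.2 ∧
        wnormE α A B q.1 ≤ ENNReal.ofReal a ∧ wnormE α A B q.2 ≤ ENNReal.ofReal a ∧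
        wnormE α A B (fun s => q.1 s - q.2 s) ≤
          ⨆ i : Fin m, wnormE α A B (fun s => φ i s - ψ i s) := by
      intro q hq
      obtain ⟨i, rfl⟩ := hprop' q hq
      exact ⟨hmφ i, hmψ i, hφ i, hψ i,
        le_iSup (fun i => wnormE α A B (fun s => φ i s - ψ i s)) i⟩
    have := ICAux.mainW α A B (ENNReal.ofReal a)
      (⨆ i : Fin m, wnormE α A B (fun s => φ i s - ψ i s)) hAne P' p.1 p.2
      (hp ▸ hmφ i₀) (hp ▸ hmψ i₀) (hp ▸ hφ i₀) (hp ▸ hψ i₀)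
      (by rw [hp]; exact le_iSup (fun i => wnormE α A B (fun s => φ i s - ψ i s)) i₀)
      hPmain
    rw [hfst', hsnd', hsum]
    simpa using this
  · intro hSφ hSψ
    have hPmain : ∀ q ∈ P', Measurable q.1 ∧ Measurable q.2 ∧
        wnormE α A B q.1 ≤ ENNReal.ofReal a ∧ wnormE α A B q.2 ≤ ENNReal.ofReal a ∧
        snormE α A B q.1 < ⊤ ∧ snormE α A B q.2 < ⊤ ∧
        snormE α A B (fun s => q.1 s - q.2 s) ≤
          ⨆ i : Fin m, snormE α A B (fun s => φ i s - ψ i s) := by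
      intro q hq
      obtain ⟨i, rfl⟩ := hprop' q hq
      exact ⟨hmφ i, hmψ i, hφ i, hψ i, hSφ i, hSψ i,
        le_iSup (fun i => snormE α A B (fun s => φ i s - ψ i s)) i⟩
    have := ICAux.mainS α A B (ENNReal.ofReal a)
      (⨆ i : Fin m, snormE α A B (fun s => φ i s - ψ i s)) hAne P' p.1 p.2
      (hp ▸ hmφ i₀) (hp ▸ hmψ i₀) (hp ▸ hφ i₀) (hp ▸ hψ i₀)
      (hp ▸ hSφ i₀) (hp ▸ hSψ i₀)
      (by rw [hp]; exact le_iSup (fun i => snormE α A B (fun s => φ i s - ψ i s)) i₀)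
      hPmain
    rw [hfst', hsnd', hsum]
    simpa using this
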